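/- Let z be a complex number with nonzero imaginary part, let T ⊆ ℂ be the closed triangle with vertices 0, 1, z (the convex hull of {0, 1, z}), and let c ∈ ℂ and r > 0 be the circumcenter and circumradius of this triangle, i.e. |c| = |c − 1| = |c − z| = r. Define k = r if c ∈ T, and k = max(1/2, |z|/2, |z − 1|/2) otherwise. Then for every real h ≥ 0: (for all w ∈ T, r² ≤ |w − c|² + h²) if and only if k ≤ h. -/

import Mathlib

open Complex

private lemma absq (u : ℂ) : ‖u‖ ^ 2 = u.re ^ 2 + u.im ^ 2 := by
  rw [Complex.sq_norm, Complex.normSq_apply]; ring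

private lemma memT (z : ℂ) (w : ℂ) :
    w ∈ convexHull ℝ ({0, 1, z} : Set ℂ) ↔
      ∃ b d : ℝ, 0 ≤ b ∧ 0 ≤ d ∧ b + d ≤ 1 ∧ w = (b : ℂ) + (d : ℂ) * z := by
  rw [show ({0,1,z} : Set ℂ) = insert 0 {1,z} from rfl,
    convexHull_insert ⟨1, by simp⟩, convexHull_pair]
  simp only [mem_convexJoin, Set.mem_singleton_iff]
  constructor
  · rintro ⟨a, rfl, u, ⟨p, q, hp, hq, hpq, rfl⟩, s, t, hs, ht, hst, rfl⟩
    refine ⟨t*p, t*q, by positivity, by positivity, by nlinarith, ?_⟩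
    simp only [smul_zero, Complex.real_smul, smul_add]
    push_cast
    ring
  · rintro ⟨b, d, hb, hd, hbd, rfl⟩
    refine ⟨0, rfl, ?_⟩
    by_cases ht : b + d = 0
    · have hb0 : b = 0 := by linarith
      have hd0 : d = 0 := by linarith
      refine ⟨1, left_mem_segment ℝ 1 z, 1, 0, by norm_num, by norm_num, by norm_num, ?_⟩
      simp [hb0, hd0]
    · have htpos : 0 < b + d := lt_of_le_of_ne (by linarith) (Ne.symm ht)
      refine ⟨(b/(b+d)) • (1:ℂ) + (d/(b+d)) • z,
        ⟨b/(b+d), d/(b+d), by positivity, by positivity, by field_simp, rfl⟩,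
        1-(b+d), b+d, by linarith, by linarith, by ring, ?_⟩
      have hne : ((b+d:ℝ):ℂ) ≠ 0 := by exact_mod_cast htpos.ne'
      push_cast at hne
      simp only [smul_zero, smul_add, smul_smul, Complex.real_smul, zero_add]
      push_cast
      field_simp

private lemma bary (x y q : ℝ) (hy : y ≠ 0) (E : 2*q*y = x^2+y^2-x)
    (p1 : 0 ≤ x) (p2 : x ≤ 1) (p3 : x ≤ x^2+y^2) :
    ∃ b d : ℝ, 0 ≤ b ∧ 0 ≤ d ∧ b + d ≤ 1 ∧ b + d*x = 1/2 ∧ d*y = q := by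
  have hy2 : (0:ℝ) < y^2 := by positivity
  refine ⟨(1-x)*(x^2+y^2)/(2*y^2), (x^2+y^2-x)/(2*y^2),
    div_nonneg (mul_nonneg (by linarith) (by positivity)) (by positivity),
    div_nonneg (by linarith) (by positivity), ?_, ?_, ?_⟩
  · rw [← add_div, div_le_one (by positivity)]
    nlinarith [mul_nonneg p1 (add_nonneg (sq_nonneg (x-1)) (sq_nonneg y))]
  · field_simp
    ring
  · field_simp
    linear_combination (-1) * E

private lemma back1 (x y q r h b d : ℝ) (E : 2*q*y = x^2+y^2-x) (hr2 : r^2 = 1/4 + q^2)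
    (hx : x < 0) (hb : 0 ≤ b) (hd : 0 ≤ d) (hbd : b + d ≤ 1)
    (hs : ((x-1)^2+y^2)/4 ≤ h^2) : r^2 ≤ (b + d*x - 1/2)^2 + (d*y - q)^2 + h^2 := by
  have key : (b + d*x - 1/2)^2 + (d*y - q)^2
      = r^2 - ((x-1)^2+y^2)/4
        + ((b + d*x - (1+x)/2)^2 + (d*y - y/2)^2 - (1-b-d)*x) := by
    linear_combination (-d) * E - hr2
  have hprod : (1-b-d)*x ≤ 0 := mul_nonpos_of_nonneg_of_nonpos (by linarith) hx.le
  linarith [sq_nonneg (b + d*x - (1+x)/2), sq_nonneg (d*y - y/2)]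

private lemma back2 (x y q r h b d : ℝ) (E : 2*q*y = x^2+y^2-x) (hr2 : r^2 = 1/4 + q^2)
    (hx : 1 < x) (hb : 0 ≤ b) (hd : 0 ≤ d) (hbd : b + d ≤ 1)
    (hs : (x^2+y^2)/4 ≤ h^2) : r^2 ≤ (b + d*x - 1/2)^2 + (d*y - q)^2 + h^2 := by
  have key : (b + d*x - 1/2)^2 + (d*y - q)^2
      = r^2 - (x^2+y^2)/4
        + ((b + d*x - x/2)^2 + (d*y - y/2)^2 - b*(1-x)) := by
    linear_combination (-d) * E - hr2
  have hprod : b*(1-x) ≤ 0 := mul_nonpos_of_nonneg_of_nonpos hb (by linarith)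
  linarith [sq_nonneg (b + d*x - x/2), sq_nonneg (d*y - y/2)]

private lemma back3 (x y q r h b d : ℝ) (E : 2*q*y = x^2+y^2-x) (hr2 : r^2 = 1/4 + q^2)
    (hx : x^2+y^2 < x) (hb : 0 ≤ b) (hd : 0 ≤ d) (hbd : b + d ≤ 1)
    (hs : (1:ℝ)/4 ≤ h^2) : r^2 ≤ (b + d*x - 1/2)^2 + (d*y - q)^2 + h^2 := by
  have key : (b + d*x - 1/2)^2 + (d*y - q)^2
      = r^2 - 1/4
        + ((b + d*x - 1/2)^2 + (d*y)^2 - d*(x^2+y^2-x)) := by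
    linear_combination (-d) * E - hr2
  have hprod : d*(x^2+y^2-x) ≤ 0 := mul_nonpos_of_nonneg_of_nonpos hd (by linarith)
  linarith [sq_nonneg (b + d*x - 1/2), sq_nonneg (d*y)]

private lemma fwd1 (x y A B h : ℝ) (hx : x < 0) (hh : 0 ≤ h)
    (hA2 : A^2 = x^2+y^2) (hB2 : B^2 = (x-1)^2+y^2) (hA : 0 ≤ A) (hB : 0 ≤ B)
    (hs : ((x-1)^2+y^2)/4 ≤ h^2) : max (1/2) (max (A/2) (B/2)) ≤ h := by
  refine max_le ?_ (max_le ?_ ?_)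
  · nlinarith [mul_pos (show (0:ℝ) < -x by linarith) (show (0:ℝ) < 2-x by linarith),
      sq_nonneg y]
  · nlinarith
  · nlinarith

private lemma fwd2 (x y A B h : ℝ) (hx : 1 < x) (hh : 0 ≤ h)
    (hA2 : A^2 = x^2+y^2) (hB2 : B^2 = (x-1)^2+y^2) (hA : 0 ≤ A) (hB : 0 ≤ B)
    (hs : (x^2+y^2)/4 ≤ h^2) : max (1/2) (max (A/2) (B/2)) ≤ h := by
  refine max_le ?_ (max_le ?_ ?_)
  · nlinarith [mul_pos (show (0:ℝ) < x-1 by linarith) (show (0:ℝ) < x+1 by linarith),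
      sq_nonneg y]
  · nlinarith
  · nlinarith

private lemma fwd3 (x y A B h : ℝ) (hx : x^2+y^2 < x) (hh : 0 ≤ h) (hy2 : 0 < y^2)
    (hA2 : A^2 = x^2+y^2) (hB2 : B^2 = (x-1)^2+y^2) (hA : 0 ≤ A) (hB : 0 ≤ B)
    (hs : (1:ℝ)/4 ≤ h^2) : max (1/2) (max (A/2) (B/2)) ≤ h := by
  refine max_le ?_ (max_le ?_ ?_)
  · nlinarith
  · nlinarith [sq_nonneg x]
  · nlinarith [sq_nonneg x]

private lemma sqle (r h : ℝ) (hr : 0 ≤ r) (hh : 0 ≤ h) (H : r ^ 2 ≤ h ^ 2) : r ≤ h := by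
  nlinarith

private lemma sqle' (r h a : ℝ) (hr : 0 ≤ r) (hh : 0 ≤ h) (hrh : r ≤ h) (ha : 0 ≤ a) :
    r ^ 2 ≤ a + h ^ 2 := by nlinarith

private lemma sqhalf (s h : ℝ) (hs : 0 ≤ s) (hh : 0 ≤ h) (hsh : s / 2 ≤ h) :
    s ^ 2 / 4 ≤ h ^ 2 := by nlinarith

set_option maxHeartbeats 1000000 in
/-- Let T be the closed triangle in ℂ with vertices 0, 1, z (z not real), let c and
r > 0 be its circumcenter and circumradius, and let k = r if c ∈ T and
k = max(1/2, |z|/2, |z−1|/2) otherwise.  Then for every h ≥ 0, the horizontal plane at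
height h meets the ideal tetrahedron with vertices ∞, 0, 1, z in the full triangular
cross-section (i.e. r² ≤ |w − c|² + h² for all w ∈ T) if and only if k ≤ h. -/
theorem triangle_cross_section_threshold (z : ℂ) (hz : z.im ≠ 0)
    (T : Set ℂ) (hT : T = convexHull ℝ ({0, 1, z} : Set ℂ))
    (c : ℂ) (r : ℝ) (hr : 0 < r)
    (hc0 : ‖c‖ = r) (hc1 : ‖c - 1‖ = r)
    (hcz : ‖c - z‖ = r)
    (k : ℝ)
    (hkin : c ∈ T → k = r)
    (hkout : c ∉ T → k = max (1 / 2) (max (‖z‖ / 2) (‖z - 1‖ / 2))) :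
    ∀ h : ℝ, 0 ≤ h →
      ((∀ w ∈ T, r ^ 2 ≤ ‖w - c‖ ^ 2 + h ^ 2) ↔ k ≤ h) := by
  intro h hh
  set x := z.re with hxdef
  set y := z.im with hydef
  have hy2 : (0:ℝ) < y ^ 2 := by positivity
  have h0 : c.re ^ 2 + c.im ^ 2 = r ^ 2 := by rw [← absq, hc0]
  have h1 : (c.re - 1) ^ 2 + c.im ^ 2 = r ^ 2 := by
    rw [← hc1, absq]
    simp [Complex.sub_re, Complex.sub_im]
  have hz2 : (c.re - x) ^ 2 + (c.im - y) ^ 2 = r ^ 2 := by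
    rw [← hcz, absq]
    simp [Complex.sub_re, Complex.sub_im]
    rfl
  have hcre : c.re = 1 / 2 := by linear_combination (h0 - h1) / 2
  have E : 2 * c.im * y = x ^ 2 + y ^ 2 - x := by
    linear_combination h0 - hz2 - 2 * x * hcre
  have hr2 : r ^ 2 = 1 / 4 + c.im ^ 2 := by
    linear_combination -h0 + (c.re + 1 / 2) * hcre
  have hA : ‖z‖ ^ 2 = x ^ 2 + y ^ 2 := by rw [absq]
  have hB : ‖z - 1‖ ^ 2 = (x - 1) ^ 2 + y ^ 2 := by
    rw [absq]; simp [Complex.sub_re, Complex.sub_im]; rfl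
  have hAnn : (0:ℝ) ≤ ‖z‖ := norm_nonneg z
  have hBnn : (0:ℝ) ≤ ‖z - 1‖ := norm_nonneg (z - 1)
  have habs : ∀ b d : ℝ, ‖(b:ℂ) + (d:ℂ) * z - c‖ ^ 2
      = (b + d * x - 1 / 2) ^ 2 + (d * y - c.im) ^ 2 := by
    intro b d
    rw [absq]
    simp only [Complex.sub_re, Complex.add_re, Complex.mul_re, Complex.ofReal_re,
      Complex.ofReal_im, Complex.sub_im, Complex.add_im, Complex.mul_im, hcre,
      ← hxdef, ← hydef]
    ring
  by_cases hcT : c ∈ T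
  · rw [hkin hcT]
    constructor
    · intro H
      have := H c hcT
      simp only [sub_self, norm_zero] at this
      exact sqle r h hr.le hh (by linarith)
    · intro hrh w _
      exact sqle' r h _ hr.le hh hrh (sq_nonneg _)
  · rw [hkout hcT]
    have hP : x < 0 ∨ 1 < x ∨ x ^ 2 + y ^ 2 < x := by
      by_contra hcon
      push_neg at hcon
      obtain ⟨p1, p2, p3⟩ := hcon
      apply hcT
      rw [hT, memT]
      obtain ⟨b, d, hb, hd, hbd, hre', him'⟩ := bary x y c.im hz E p1 p2 p3
      refine ⟨b, d, hb, hd, hbd, ?_⟩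
      apply Complex.ext
      · simp only [Complex.add_re, Complex.mul_re, Complex.ofReal_re, Complex.ofReal_im,
          ← hxdef, ← hydef, hcre]
        linarith [hre']
      · simp only [Complex.add_im, Complex.mul_im, Complex.ofReal_re, Complex.ofReal_im,
          ← hxdef, ← hydef]
        linarith [him']
    constructor
    · intro H
      have key1 : ∀ b d : ℝ, 0 ≤ b → 0 ≤ d → b + d ≤ 1 →
          r ^ 2 ≤ (b + d * x - 1 / 2) ^ 2 + (d * y - c.im) ^ 2 + h ^ 2 := by
        intro b d hb hd hbd
        have := H ((b : ℂ) + (d : ℂ) * z) (by rw [hT, memT]; exact ⟨b, d, hb, hd, hbd, rfl⟩)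
        rwa [habs] at this
      rcases hP with hx | hx | hx
      · have hM := key1 (1 / 2) (1 / 2) (by norm_num) (by norm_num) (by norm_num)
        have e1 : (1 / 2 + 1 / 2 * x - 1 / 2) ^ 2 + (1 / 2 * y - c.im) ^ 2
            = r ^ 2 - ((x - 1) ^ 2 + y ^ 2) / 4 := by
          linear_combination (-(1 / 2)) * E - hr2
        have hs : ((x - 1) ^ 2 + y ^ 2) / 4 ≤ h ^ 2 := by linarith [hM, e1]
        exact fwd1 x y _ _ h hx hh hA hB hAnn hBnn hs
      · have hM := key1 0 (1 / 2) (by norm_num) (by norm_num) (by norm_num)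
        have e2 : (0 + 1 / 2 * x - 1 / 2) ^ 2 + (1 / 2 * y - c.im) ^ 2
            = r ^ 2 - (x ^ 2 + y ^ 2) / 4 := by
          linear_combination (-(1 / 2)) * E - hr2
        have hs : (x ^ 2 + y ^ 2) / 4 ≤ h ^ 2 := by linarith [hM, e2]
        exact fwd2 x y _ _ h hx hh hA hB hAnn hBnn hs
      · have hM := key1 (1 / 2) 0 (by norm_num) (by norm_num) (by norm_num)
        have e3 : (1 / 2 + 0 * x - 1 / 2) ^ 2 + (0 * y - c.im) ^ 2 = r ^ 2 - 1 / 4 := by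
          linear_combination -hr2
        have hs : (1:ℝ) / 4 ≤ h ^ 2 := by linarith [hM, e3]
        exact fwd3 x y _ _ h hx hh hy2 hA hB hAnn hBnn hs
    · intro hkh w hw
      rw [hT, memT] at hw
      obtain ⟨b, d, hb, hd, hbd, rfl⟩ := hw
      rw [habs]
      rcases hP with hx | hx | hx
      · have hkk : ‖z - 1‖ / 2 ≤ h :=
          le_trans (le_trans (le_max_right _ _) (le_max_right _ _)) hkh
        have hs : ((x - 1) ^ 2 + y ^ 2) / 4 ≤ h ^ 2 := by
          have := sqhalf _ h hBnn hh hkk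
          linarith [hB]
        exact back1 x y c.im r h b d E hr2 hx hb hd hbd hs
      · have hkk : ‖z‖ / 2 ≤ h :=
          le_trans (le_trans (le_max_left _ _) (le_max_right _ _)) hkh
        have hs : (x ^ 2 + y ^ 2) / 4 ≤ h ^ 2 := by
          have := sqhalf _ h hAnn hh hkk
          linarith [hA]
        exact back2 x y c.im r h b d E hr2 hx hb hd hbd hs
      · have hkk : (1:ℝ) / 2 ≤ h := le_trans (le_max_left _ _) hkh
        have hs : (1:ℝ) / 4 ≤ h ^ 2 := by
          have := sqhalf 1 h zero_le_one hh hkk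
          linarith
        exact back3 x y c.im r h b d E hr2 hx hb hd hbd hs
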